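/- Let f : 2^{1,…,n} → ℝ be a monotone nondecreasing submodular set function with f(∅) = 0, let c¹,…,cⁿ > 0 be costs and c̄ > 0 a budget. Consider the generalized greedy algorithm (with cost-scaling exponent β = 1): starting from the empty set, repeatedly select among unexamined elements the element j* maximizing the cost-scaled marginal gain (f(ι̃∪{j}) − f(ι̃)) / c^j over j not yet in the current set ι̃, add j* to ι̃ if the total cost of ι̃∪{j*} does not exceed c̄, and in any case remove j* from further consideration; upon termination output ι^g, the better (with respect to f) of the constructed set ι̃ and the best feasible singleton {j₁*} where j₁* maximizes f({j}) over j with c^j ≤ c̄. Then f(ι^g) ≥ (1 − 1/√e) · f(ι*), where ι* is an optimal solution of maximizing f(ι) subject to Σ_{i∈ι} c^i ≤ c̄. -/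

import Mathlib

open Finset

/-- An element of the finite set `X` maximizing `g` (ties broken by choice). -/
noncomputable def argmaxIn {n : ℕ} (X : Finset (Fin n)) (g : Fin n → ℝ) (h : X.Nonempty) :
    Fin n :=
  Classical.choose (Finset.exists_max_image X g h)

lemma argmaxIn_mem {n : ℕ} (X : Finset (Fin n)) (g : Fin n → ℝ) (h : X.Nonempty) :
    argmaxIn X g h ∈ X :=
  (Classical.choose_spec (Finset.exists_max_image X g h)).1

lemma argmaxIn_spec {n : ℕ} (X : Finset (Fin n)) (g : Fin n → ℝ) (h : X.Nonempty) :
    ∀ x ∈ X, g x ≤ g (argmaxIn X g h) :=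
  (Classical.choose_spec (Finset.exists_max_image X g h)).2


/-- The main loop of the generalized greedy algorithm (cost-scaling exponent `β = 1`):
given the set `Xt` of not-yet-examined elements and the current set `ιt`, repeatedly select among
the unexamined elements the element `j*` maximizing the cost-scaled marginal gain
`(f(ιt ∪ {j}) − f(ιt)) / c j`, add `j*` to `ιt` whenever the total cost of `ιt ∪ {j*}` does not
exceed the budget `cbar`, and in any case remove `j*` from further consideration. -/
noncomputable def greedyLoop {n : ℕ} (f : Finset (Fin n) → ℝ) (c : Fin n → ℝ) (cbar : ℝ) :
    Finset (Fin n) → Finset (Fin n) → Finset (Fin n) := fun Xt ιt =>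
  if h : Xt.Nonempty then
    let j := argmaxIn Xt (fun j => (f (insert j ιt) - f ιt) / c j) h
    greedyLoop f c cbar (Xt.erase j)
      (if (∑ i ∈ ιt, c i) + c j ≤ cbar then insert j ιt else ιt)
  else ιt
termination_by Xt => Xt.card
decreasing_by
  exact Finset.card_erase_lt_of_mem (argmaxIn_mem _ _ h)

lemma subset_greedyLoop {n : ℕ} (f : Finset (Fin n) → ℝ) (c : Fin n → ℝ) (cbar : ℝ) :
    ∀ (Xt ιt : Finset (Fin n)), ιt ⊆ greedyLoop f c cbar Xt ιt := by
  intro Xt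
  induction Xt using Finset.strongInductionOn with
  | _ Xt ih =>
    intro ιt
    rw [greedyLoop]
    split_ifs with h
    · refine subset_trans ?_ (ih _ (Finset.erase_ssubset (argmaxIn_mem _ _ h)) _)
      split_ifs with h2
      · exact Finset.subset_insert _ _
      · exact subset_rfl
    · exact subset_rfl

private lemma margin_nonneg {n : ℕ} {f : Finset (Fin n) → ℝ}
    (hmono : ∀ T₁ T₂ : Finset (Fin n), T₁ ⊆ T₂ → f T₁ ≤ f T₂) (j : Fin n)
    (S : Finset (Fin n)) : 0 ≤ f (insert j S) - f S := by
  have := hmono S (insert j S) (Finset.subset_insert _ _); linarith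

private lemma submod_pair {n : ℕ} {f : Finset (Fin n) → ℝ}
    (hsubmod : ∀ T₁ T₂ : Finset (Fin n), T₁ ⊆ T₂ → T₂ ⊂ Finset.univ → ∀ i ∉ T₂,
      f (insert i T₁) - f T₁ ≥ f (insert i T₂) - f T₂)
    {A C : Finset (Fin n)} (hAC : A ⊆ C) {i : Fin n} (hi : i ∉ C) :
    f (insert i C) - f C ≤ f (insert i A) - f A := by
  have hC : C ⊂ Finset.univ := by
    rw [Finset.ssubset_univ_iff]
    intro h
    subst h
    exact hi (Finset.mem_univ i)
  exact hsubmod A C hAC hC i hi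

private lemma telescope {n : ℕ} {f : Finset (Fin n) → ℝ}
    (hmono : ∀ T₁ T₂ : Finset (Fin n), T₁ ⊆ T₂ → f T₁ ≤ f T₂)
    (hsubmod : ∀ T₁ T₂ : Finset (Fin n), T₁ ⊆ T₂ → T₂ ⊂ Finset.univ → ∀ i ∉ T₂,
      f (insert i T₁) - f T₁ ≥ f (insert i T₂) - f T₂)
    (T : Finset (Fin n)) :
    ∀ S : Finset (Fin n), f (S ∪ T) ≤ f S + ∑ j ∈ T \ S, (f (insert j S) - f S) := by
  induction T using Finset.induction_on with
  | empty => intro S; simp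
  | @insert a T ha ih =>
    intro S
    by_cases haS : a ∈ S
    · have h1 : S ∪ insert a T = S ∪ T := by
        rw [Finset.union_insert, Finset.insert_eq_self.mpr (Finset.mem_union_left T haS)]
      have h2 : insert a T \ S = T \ S := Finset.insert_sdiff_of_mem _ haS
      rw [h1, h2]; exact ih S
    · have h1 : S ∪ insert a T = insert a (S ∪ T) := Finset.union_insert _ _ _
      have h2 : insert a T \ S = insert a (T \ S) := by
        ext x
        simp only [Finset.mem_sdiff, Finset.mem_insert]
        constructor
        · rintro ⟨(rfl | hx), hxS⟩
          · exact Or.inl rfl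
          · exact Or.inr ⟨hx, hxS⟩
        · rintro (rfl | ⟨hx, hxS⟩)
          · exact ⟨Or.inl rfl, haS⟩
          · exact ⟨Or.inr hx, hxS⟩
      have ha2 : a ∉ S ∪ T := by
        simp only [Finset.mem_union]; tauto
      have h3 : f (insert a (S ∪ T)) - f (S ∪ T) ≤ f (insert a S) - f S :=
        submod_pair hsubmod Finset.subset_union_left ha2
      have h4 : a ∉ T \ S := by simp [ha]
      rw [h1, h2, Finset.sum_insert h4]
      have h5 := ih S
      linarith

private lemma density_le {n : ℕ} {f : Finset (Fin n) → ℝ} {c : Fin n → ℝ}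
    (hmono : ∀ T₁ T₂ : Finset (Fin n), T₁ ⊆ T₂ → f T₁ ≤ f T₂)
    (hc : ∀ i, 0 < c i) {Xt : Finset (Fin n)} (hne : Xt.Nonempty)
    (ιt : Finset (Fin n)) (R : Finset (Fin n)) (hR : R ⊆ Xt) {W : ℝ}
    (hW : ∑ j ∈ R, c j ≤ W) :
    ∑ j ∈ R, (f (insert j ιt) - f ιt) ≤
      W * ((f (insert (argmaxIn Xt (fun j => (f (insert j ιt) - f ιt) / c j) hne) ιt) - f ιt)
        / c (argmaxIn Xt (fun j => (f (insert j ιt) - f ιt) / c j) hne)) := by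
  set js := argmaxIn Xt (fun j => (f (insert j ιt) - f ιt) / c j) hne with hjs
  have hdnn : 0 ≤ (f (insert js ιt) - f ιt) / c js :=
    div_nonneg (margin_nonneg hmono _ _) (hc js).le
  calc ∑ j ∈ R, (f (insert j ιt) - f ιt)
      ≤ ∑ j ∈ R, c j * ((f (insert js ιt) - f ιt) / c js) := by
        apply Finset.sum_le_sum
        intro j hj
        have hspec := argmaxIn_spec Xt (fun j => (f (insert j ιt) - f ιt) / c j) hne j (hR hj)
        rw [← hjs] at hspec
        have h2 := (div_le_iff₀ (hc j)).mp hspec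
        rw [mul_comm]
        exact h2
    _ = (∑ j ∈ R, c j) * ((f (insert js ιt) - f ιt) / c js) := by rw [Finset.sum_mul]
    _ ≤ W * ((f (insert js ιt) - f ιt) / c js) := mul_le_mul_of_nonneg_right hW hdnn

private lemma step_decay {old gain cj W D : ℝ} (hcj : 0 < cj) (hD : 0 ≤ D)
    (hold : old ≤ D) (hgain : 0 ≤ gain)
    (hkey : old ≤ W * (gain / cj)) :
    old - gain ≤ D * Real.exp (-(cj / W)) := by
  have hexp_pos := Real.exp_pos (-(cj / W))
  rcases le_or_gt W 0 with hW | hW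
  · have h1 : (0:ℝ) ≤ -(cj / W) := by
      rcases eq_or_lt_of_le hW with h | h
      · rw [h, div_zero, neg_zero]
      · have h2 : cj / W < 0 := div_neg_of_pos_of_neg hcj h
        linarith
    have h2 : (1:ℝ) ≤ Real.exp (-(cj / W)) := by
      rw [← Real.exp_zero]; exact Real.exp_le_exp.mpr h1
    nlinarith [mul_le_mul_of_nonneg_left h2 hD]
  · have hdivW : old / W ≤ gain / cj := by
      rw [div_le_div_iff₀ hW hcj]
      calc old * cj ≤ W * (gain / cj) * cj := mul_le_mul_of_nonneg_right hkey hcj.le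
        _ = W * gain := by rw [mul_assoc, div_mul_cancel₀ gain hcj.ne']
        _ = gain * W := mul_comm _ _
    have hgain2 : old * (cj / W) ≤ gain := by
      have h3 := mul_le_mul_of_nonneg_right hdivW hcj.le
      have h4 : gain / cj * cj = gain := div_mul_cancel₀ gain hcj.ne'
      calc old * (cj / W) = old / W * cj := by ring
        _ ≤ gain / cj * cj := h3
        _ = gain := h4
    rcases le_or_gt old 0 with hold0 | hold0
    · nlinarith [mul_nonneg hD hexp_pos.le]
    · have hexp : 1 - cj / W ≤ Real.exp (-(cj / W)) := by
        have := Real.add_one_le_exp (-(cj / W)); linarith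
      calc old - gain ≤ old - old * (cj / W) := by linarith
        _ = old * (1 - cj / W) := by ring
        _ ≤ old * Real.exp (-(cj / W)) := mul_le_mul_of_nonneg_left hexp hold0.le
        _ ≤ D * Real.exp (-(cj / W)) := mul_le_mul_of_nonneg_right hold hexp_pos.le

private lemma lemmaR {s w : ℝ} (hw : 0 < w) (hws : w ≤ s) (hs : s ≤ 1/2) :
    (Real.exp (-s) - (1 - Real.exp (-(1/2 : ℝ)))) * Real.exp (-((1 - s - w) / w)) ≤
      2 * Real.exp (-(1/2 : ℝ)) - 1 := by
  set E := Real.exp (-(1/2 : ℝ)) with hEdef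
  have hEpos : 0 < E := Real.exp_pos _
  have hE2 : E * E = Real.exp (-1 : ℝ) := by
    rw [hEdef, ← Real.exp_add]; norm_num
  have he1 : Real.exp 1 < 49/16 := lt_trans Real.exp_one_lt_d9 (by norm_num)
  have hinv : (16:ℝ)/49 < Real.exp (-1 : ℝ) := by
    rw [Real.exp_neg]
    have h1 : ((49:ℝ)/16)⁻¹ < (Real.exp 1)⁻¹ :=
      inv_strictAnti₀ (Real.exp_pos 1) he1
    calc (16:ℝ)/49 = ((49:ℝ)/16)⁻¹ := by norm_num
      _ < (Real.exp 1)⁻¹ := h1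
  have hE47 : (4:ℝ)/7 < E := by nlinarith
  have hs0 : 0 < s := lt_of_lt_of_le hw hws
  have h1s : (0:ℝ) ≤ 1 - s := by linarith
  -- positivity of the first factor
  have hEexp : E ≤ Real.exp (-s) := by
    rw [hEdef]; apply Real.exp_le_exp.mpr; linarith
  have hpos : 0 < Real.exp (-s) - (1 - E) := by nlinarith
  -- monotonicity in w of the second factor
  have hexp2 : Real.exp (-((1 - s - w) / w)) ≤ Real.exp (-((1 - 2*s) / s)) := by
    apply Real.exp_le_exp.mpr
    have hq : (1 - s) / s ≤ (1 - s) / w := by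
      apply div_le_div_of_nonneg_left h1s hw hws
    have hw' : (1 - s - w) / w = (1 - s) / w - 1 := by field_simp
    have hs' : (1 - 2*s) / s = (1 - s) / s - 1 := by field_simp; ring
    rw [hw', hs']
    linarith
  have step1 : (Real.exp (-s) - (1 - E)) * Real.exp (-((1 - s - w) / w)) ≤
      (Real.exp (-s) - (1 - E)) * Real.exp (-((1 - 2*s) / s)) :=
    mul_le_mul_of_nonneg_left hexp2 hpos.le
  -- key single-variable bound
  have hkey : (Real.exp (-s) - (1 - E)) ≤ (2*E - 1) * Real.exp ((1 - 2*s) / s) := by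
    have hlin : (1 - s) / s ≤ Real.exp ((1 - 2*s) / s) := by
      have h := Real.add_one_le_exp ((1 - 2*s) / s)
      have : (1 - 2*s) / s + 1 = (1 - s) / s := by field_simp; ring
      linarith
    have h2E1 : (0:ℝ) < 2*E - 1 := by linarith
    have hmul : (2*E - 1) * ((1 - s) / s) ≤ (2*E - 1) * Real.exp ((1 - 2*s) / s) :=
      mul_le_mul_of_nonneg_left hlin h2E1.le
    -- tangent-line bound: s * exp (-s) ≤ E/2 * (s + 1/2)
    have htan : s * Real.exp (-s) ≤ E/2 * (s + 1/2) := by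
      have hea : Real.exp (s - 1/2) = Real.exp s * E := by
        rw [hEdef, ← Real.exp_add, sub_eq_add_neg]
      have h1 : s + 1/2 ≤ Real.exp s * E := by
        have := Real.add_one_le_exp (s - 1/2)
        rw [hea] at this; linarith
      have h2 : 2*s ≤ (s + 1/2)^2 := by nlinarith [sq_nonneg (s - 1/2)]
      have h3 : (s + 1/2)^2 ≤ (s + 1/2) * (Real.exp s * E) := by
        rw [sq]
        exact mul_le_mul_of_nonneg_left h1 (by linarith)
      have h4 : 2*s ≤ (s + 1/2) * (Real.exp s * E) := le_trans h2 h3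
      have h5 : Real.exp s * Real.exp (-s) = 1 := by
        rw [← Real.exp_add]; simp
      have h6 := mul_le_mul_of_nonneg_right h4 (Real.exp_pos (-s)).le
      have h7 : (s + 1/2) * (Real.exp s * E) * Real.exp (-s) = (s + 1/2) * E := by
        calc (s + 1/2) * (Real.exp s * E) * Real.exp (-s)
            = (s + 1/2) * E * (Real.exp s * Real.exp (-s)) := by ring
          _ = (s + 1/2) * E := by rw [h5, mul_one]
      rw [h7] at h6
      linarith
    -- linear part: E/2*(s+1/2) ≤ (2E-1)(1-s) + s(1-E)
    have hlin2 : E/2 * (s + 1/2) ≤ (2*E - 1)*(1 - s) + s*(1 - E) := by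
      nlinarith [mul_nonneg (by linarith : (0:ℝ) ≤ 7*E/4 - 1) (by linarith : (0:ℝ) ≤ 1 - 2*s)]
    -- conclude: s*(exp(-s) - (1-E)) ≤ (2E-1)*(1-s)
    have hcore : (Real.exp (-s) - (1 - E)) * s ≤ (2*E - 1) * (1 - s) := by
      have hexpand : (Real.exp (-s) - (1 - E)) * s = s * Real.exp (-s) - s*(1 - E) := by ring
      rw [hexpand]
      linarith
    have hdiv : Real.exp (-s) - (1 - E) ≤ (2*E - 1) * ((1 - s) / s) := by
      have h10 := (le_div_iff₀ hs0).mpr hcore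
      rw [mul_div_assoc] at h10
      exact h10
    linarith
  -- multiply hkey by exp(-((1-2s)/s))
  have hfin : (Real.exp (-s) - (1 - E)) * Real.exp (-((1 - 2*s) / s)) ≤ 2*E - 1 := by
    have h8 := mul_le_mul_of_nonneg_right hkey (Real.exp_pos (-((1 - 2*s) / s))).le
    have h9 : (2*E - 1) * Real.exp ((1 - 2*s) / s) * Real.exp (-((1 - 2*s) / s)) = 2*E - 1 := by
      rw [mul_assoc, ← Real.exp_add]
      simp
    rw [h9] at h8
    exact h8
  linarith

private lemma greedyLoop_eq {n : ℕ} (f : Finset (Fin n) → ℝ) (c : Fin n → ℝ) (cbar : ℝ)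
    (Xt ιt : Finset (Fin n)) (hne : Xt.Nonempty) :
    greedyLoop f c cbar Xt ιt =
      greedyLoop f c cbar
        (Xt.erase (argmaxIn Xt (fun j => (f (insert j ιt) - f ιt) / c j) hne))
        (if (∑ i ∈ ιt, c i) + c (argmaxIn Xt (fun j => (f (insert j ιt) - f ιt) / c j) hne) ≤ cbar
          then insert (argmaxIn Xt (fun j => (f (insert j ιt) - f ιt) / c j) hne) ιt else ιt) := by
  rw [greedyLoop, dif_pos hne]

private lemma greedyLoop_empty {n : ℕ} (f : Finset (Fin n) → ℝ) (c : Fin n → ℝ) (cbar : ℝ)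
    (Xt ιt : Finset (Fin n)) (hne : ¬ Xt.Nonempty) :
    greedyLoop f c cbar Xt ιt = ιt := by
  rw [greedyLoop, dif_neg hne]

private lemma loopB {n : ℕ} (f : Finset (Fin n) → ℝ) (c : Fin n → ℝ) (cbar : ℝ)
    (hmono : ∀ T₁ T₂ : Finset (Fin n), T₁ ⊆ T₂ → f T₁ ≤ f T₂)
    (hsubmod : ∀ T₁ T₂ : Finset (Fin n), T₁ ⊆ T₂ → T₂ ⊂ Finset.univ → ∀ i ∉ T₂,
      f (insert i T₁) - f T₁ ≥ f (insert i T₂) - f T₂)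
    (hc : ∀ i, 0 < c i)
    (ιstar : Finset (Fin n)) (hfeas : ∑ i ∈ ιstar, c i ≤ cbar)
    (d₁ : Fin n) (hd₁s : d₁ ∈ ιstar) (h₁ : ℝ) :
    ∀ Xt : Finset (Fin n), ∀ ιt : Finset (Fin n),
      Disjoint Xt ιt → d₁ ∉ Xt → d₁ ∉ ιt →
      (ιstar \ ιt).erase d₁ ⊆ Xt →
      f (insert d₁ ιt) - f ιt ≤ h₁ →
      (f ιstar ≤ f (greedyLoop f c cbar Xt ιt) + h₁ ∨
        ∃ S₂ : Finset (Fin n), ∃ d₂ : Fin n, d₂ ∈ ιstar ∧ d₂ ≠ d₁ ∧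
          cbar < (∑ i ∈ S₂, c i) + c d₂ ∧
          f S₂ ≤ f (greedyLoop f c cbar Xt ιt) ∧
          (∀ D : ℝ, 0 ≤ D → f ιstar - h₁ - f ιt ≤ D →
            f ιstar - h₁ - f S₂ ≤
              D * Real.exp (-(((∑ i ∈ S₂, c i) - (∑ i ∈ ιt, c i)) / (cbar - c d₁))))) := by
  intro Xt
  induction Xt using Finset.strongInductionOn with
  | _ Xt ih =>
    intro ιt hdisj hd₁X hd₁ι havail hmarg
    by_cases hne : Xt.Nonempty
    · rw [greedyLoop_eq f c cbar Xt ιt hne]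
      set js := argmaxIn Xt (fun j => (f (insert j ιt) - f ιt) / c j) hne with hjsdef
      have hjmem : js ∈ Xt := by rw [hjsdef]; exact argmaxIn_mem _ _ hne
      have hjι : js ∉ ιt := Finset.disjoint_left.mp hdisj hjmem
      have hd₁j : d₁ ≠ js := fun h => hd₁X (h ▸ hjmem)
      by_cases hfit : (∑ i ∈ ιt, c i) + c js ≤ cbar
      · -- element js is added
        rw [if_pos hfit]
        have hdisj' : Disjoint (Xt.erase js) (insert js ιt) := by
          rw [Finset.disjoint_left]
          intro x hx hx2
          rcases Finset.mem_insert.mp hx2 with h | h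
          · exact (Finset.mem_erase.mp hx).1 h
          · exact Finset.disjoint_left.mp hdisj (Finset.mem_of_mem_erase hx) h
        have hd₁X' : d₁ ∉ Xt.erase js := fun h => hd₁X (Finset.mem_of_mem_erase h)
        have hd₁ι' : d₁ ∉ insert js ιt := by
          rw [Finset.mem_insert]
          rintro (h | h)
          exacts [hd₁j h, hd₁ι h]
        have havail' : (ιstar \ insert js ιt).erase d₁ ⊆ Xt.erase js := by
          intro x hx
          rw [Finset.mem_erase, Finset.mem_sdiff, Finset.mem_insert] at hx
          push_neg at hx
          exact Finset.mem_erase.mpr ⟨hx.2.2.1,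
            havail (by
              rw [Finset.mem_erase, Finset.mem_sdiff]
              exact ⟨hx.1, hx.2.1, hx.2.2.2⟩)⟩
        have hmarg' : f (insert d₁ (insert js ιt)) - f (insert js ιt) ≤ h₁ :=
          le_trans (submod_pair hsubmod (Finset.subset_insert _ _) hd₁ι') hmarg
        rcases ih _ (Finset.erase_ssubset hjmem) _ hdisj' hd₁X' hd₁ι' havail' hmarg' with
          hleft | ⟨S₂, d₂, hd₂s, hd₂ne, hskip₂, hfS₂, hchain⟩
        · exact Or.inl hleft
        · refine Or.inr ⟨S₂, d₂, hd₂s, hd₂ne, hskip₂, hfS₂, ?_⟩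
          intro D hD hDle
          -- density inequality at the current step
          have hsum : f ιstar - f ιt ≤ ∑ j ∈ ιstar \ ιt, (f (insert j ιt) - f ιt) := by
            have ha := hmono ιstar (ιt ∪ ιstar) Finset.subset_union_right
            have hb := telescope hmono hsubmod ιstar ιt
            linarith
          have hd₁mem : d₁ ∈ ιstar \ ιt := Finset.mem_sdiff.mpr ⟨hd₁s, hd₁ι⟩
          have hsplit : ∑ j ∈ (ιstar \ ιt).erase d₁, (f (insert j ιt) - f ιt)
              + (f (insert d₁ ιt) - f ιt) = ∑ j ∈ ιstar \ ιt, (f (insert j ιt) - f ιt) :=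
            Finset.sum_erase_add _ _ hd₁mem
          have hcsub : ∑ j ∈ (ιstar \ ιt).erase d₁, c j ≤ cbar - c d₁ := by
            have hsub : (ιstar \ ιt).erase d₁ ⊆ ιstar.erase d₁ := by
              intro x hx
              rw [Finset.mem_erase] at hx ⊢
              exact ⟨hx.1, (Finset.mem_sdiff.mp hx.2).1⟩
            have h3 : ∑ j ∈ (ιstar \ ιt).erase d₁, c j ≤ ∑ j ∈ ιstar.erase d₁, c j :=
              Finset.sum_le_sum_of_subset_of_nonneg hsub (fun i _ _ => (hc i).le)
            have h4 : ∑ j ∈ ιstar.erase d₁, c j + c d₁ = ∑ j ∈ ιstar, c j :=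
              Finset.sum_erase_add _ _ hd₁s
            linarith
          have hdens := density_le hmono hc hne ιt _ havail hcsub
          rw [← hjsdef] at hdens
          have hkey : f ιstar - h₁ - f ιt ≤
              (cbar - c d₁) * ((f (insert js ιt) - f ιt) / c js) := by linarith
          have hstep := step_decay (hc js) hD hDle (margin_nonneg hmono js ιt) hkey
          have hstep2 : f ιstar - h₁ - f (insert js ιt) ≤
              D * Real.exp (-(c js / (cbar - c d₁))) := by
            have heq2 : f ιstar - h₁ - f (insert js ιt)
                = (f ιstar - h₁ - f ιt) - (f (insert js ιt) - f ιt) := by ring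
            rw [heq2]
            exact hstep
          have hres := hchain (D * Real.exp (-(c js / (cbar - c d₁))))
            (mul_nonneg hD (Real.exp_pos _).le) hstep2
          have hsum_ins : ∑ i ∈ insert js ιt, c i = c js + ∑ i ∈ ιt, c i :=
            Finset.sum_insert hjι
          rw [hsum_ins] at hres
          have heq : D * Real.exp (-(c js / (cbar - c d₁))) *
              Real.exp (-(((∑ i ∈ S₂, c i) - (c js + ∑ i ∈ ιt, c i)) / (cbar - c d₁)))
              = D * Real.exp (-(((∑ i ∈ S₂, c i) - (∑ i ∈ ιt, c i)) / (cbar - c d₁))) := by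
            rw [mul_assoc, ← Real.exp_add]
            congr 2
            ring
          rw [heq] at hres
          exact hres
      · -- js does not fit
        rw [if_neg hfit]
        by_cases hjstar : js ∈ ιstar
        · -- second skipped optimal element: stop the analysis here
          refine Or.inr ⟨ιt, js, hjstar, fun h => hd₁j h.symm,
            by push_neg at hfit; linarith, ?_, ?_⟩
          · exact hmono _ _ (subset_greedyLoop f c cbar _ _)
          · intro D hD hDle
            simpa using hDle
        · -- skipped element not in ιstar: pass through
          have havail' : (ιstar \ ιt).erase d₁ ⊆ Xt.erase js := by
            intro x hx
            refine Finset.mem_erase.mpr ⟨?_, havail hx⟩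
            intro h
            exact hjstar (h ▸ (Finset.mem_sdiff.mp (Finset.mem_of_mem_erase hx)).1)
          exact ih _ (Finset.erase_ssubset hjmem) _
            (hdisj.mono_left (Finset.erase_subset _ _))
            (fun h => hd₁X (Finset.mem_of_mem_erase h)) hd₁ι havail' hmarg
    · -- Xt is empty
      rw [greedyLoop_empty f c cbar Xt ιt hne]
      left
      have hXtempty : Xt = ∅ := Finset.not_nonempty_iff_eq_empty.mp hne
      have hsub : ιstar ⊆ insert d₁ ιt := by
        intro x hx
        rw [Finset.mem_insert]
        by_contra hcon
        push_neg at hcon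
        have hx2 : x ∈ (ιstar \ ιt).erase d₁ :=
          Finset.mem_erase.mpr ⟨hcon.1, Finset.mem_sdiff.mpr ⟨hx, hcon.2⟩⟩
        rw [hXtempty] at havail
        exact absurd (havail hx2) (Finset.notMem_empty x)
      have := hmono ιstar (insert d₁ ιt) hsub
      linarith

private lemma loopA {n : ℕ} (f : Finset (Fin n) → ℝ) (c : Fin n → ℝ) (cbar : ℝ)
    (hmono : ∀ T₁ T₂ : Finset (Fin n), T₁ ⊆ T₂ → f T₁ ≤ f T₂)
    (hsubmod : ∀ T₁ T₂ : Finset (Fin n), T₁ ⊆ T₂ → T₂ ⊂ Finset.univ → ∀ i ∉ T₂,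
      f (insert i T₁) - f T₁ ≥ f (insert i T₂) - f T₂)
    (hempty : f ∅ = 0) (hc : ∀ i, 0 < c i)
    (ιstar : Finset (Fin n)) (hfeas : ∑ i ∈ ιstar, c i ≤ cbar)
    (H' : ℝ) (hH0 : 0 ≤ H') (hHs : ∀ j ∈ ιstar, f {j} ≤ H') :
    ∀ Xt : Finset (Fin n), ∀ ιt : Finset (Fin n),
      Disjoint Xt ιt → ιstar \ ιt ⊆ Xt →
      (f ιstar ≤ f (greedyLoop f c cbar Xt ιt) + H' ∨
        ∃ S₁ : Finset (Fin n), ∃ d₁ : Fin n, ∃ S₂ : Finset (Fin n), ∃ d₂ : Fin n, ∃ h₁ : ℝ,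
          d₁ ∈ ιstar ∧ d₂ ∈ ιstar ∧ d₂ ≠ d₁ ∧ 0 ≤ h₁ ∧ h₁ ≤ H' ∧
          cbar < (∑ i ∈ S₁, c i) + c d₁ ∧
          cbar < (∑ i ∈ S₂, c i) + c d₂ ∧
          f S₁ ≤ f (greedyLoop f c cbar Xt ιt) ∧
          f S₂ ≤ f (greedyLoop f c cbar Xt ιt) ∧
          (∀ D : ℝ, 0 ≤ D → f ιstar - f ιt ≤ D →
            f ιstar - f S₁ ≤ D * Real.exp (-(((∑ i ∈ S₁, c i) - (∑ i ∈ ιt, c i)) / cbar))) ∧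
          (∀ D : ℝ, 0 ≤ D → f ιstar - h₁ - f S₁ ≤ D →
            f ιstar - h₁ - f S₂ ≤
              D * Real.exp (-(((∑ i ∈ S₂, c i) - (∑ i ∈ S₁, c i)) / (cbar - c d₁))))) := by
  intro Xt
  induction Xt using Finset.strongInductionOn with
  | _ Xt ih =>
    intro ιt hdisj havail
    by_cases hne : Xt.Nonempty
    · rw [greedyLoop_eq f c cbar Xt ιt hne]
      set js := argmaxIn Xt (fun j => (f (insert j ιt) - f ιt) / c j) hne with hjsdef
      have hjmem : js ∈ Xt := by rw [hjsdef]; exact argmaxIn_mem _ _ hne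
      have hjι : js ∉ ιt := Finset.disjoint_left.mp hdisj hjmem
      by_cases hfit : (∑ i ∈ ιt, c i) + c js ≤ cbar
      · -- element js is added
        rw [if_pos hfit]
        have hdisj' : Disjoint (Xt.erase js) (insert js ιt) := by
          rw [Finset.disjoint_left]
          intro x hx hx2
          rcases Finset.mem_insert.mp hx2 with h | h
          · exact (Finset.mem_erase.mp hx).1 h
          · exact Finset.disjoint_left.mp hdisj (Finset.mem_of_mem_erase hx) h
        have havail' : ιstar \ insert js ιt ⊆ Xt.erase js := by
          intro x hx
          rw [Finset.mem_sdiff, Finset.mem_insert] at hx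
          push_neg at hx
          exact Finset.mem_erase.mpr ⟨hx.2.1,
            havail (Finset.mem_sdiff.mpr ⟨hx.1, hx.2.2⟩)⟩
        rcases ih _ (Finset.erase_ssubset hjmem) _ hdisj' havail' with
          hleft | ⟨S₁, d₁, S₂, d₂, h₁, hd₁s, hd₂s, hd₂₁, hh₁nn, hh₁H, hskip₁, hskip₂,
            hfS₁, hfS₂, hchain₁, hchain₂⟩
        · exact Or.inl hleft
        · refine Or.inr ⟨S₁, d₁, S₂, d₂, h₁, hd₁s, hd₂s, hd₂₁, hh₁nn, hh₁H, hskip₁, hskip₂,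
            hfS₁, hfS₂, ?_, hchain₂⟩
          intro D hD hDle
          -- density inequality at the current step (no excluded element)
          have hsum : f ιstar - f ιt ≤ ∑ j ∈ ιstar \ ιt, (f (insert j ιt) - f ιt) := by
            have ha := hmono ιstar (ιt ∪ ιstar) Finset.subset_union_right
            have hb := telescope hmono hsubmod ιstar ιt
            linarith
          have hcsub : ∑ j ∈ ιstar \ ιt, c j ≤ cbar := by
            have h3 : ∑ j ∈ ιstar \ ιt, c j ≤ ∑ j ∈ ιstar, c j :=
              Finset.sum_le_sum_of_subset_of_nonneg Finset.sdiff_subset (fun i _ _ => (hc i).le)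
            linarith
          have hdens := density_le hmono hc hne ιt _ havail hcsub
          rw [← hjsdef] at hdens
          have hkey : f ιstar - f ιt ≤ cbar * ((f (insert js ιt) - f ιt) / c js) := by linarith
          have hstep := step_decay (hc js) hD hDle (margin_nonneg hmono js ιt) hkey
          have hstep2 : f ιstar - f (insert js ιt) ≤ D * Real.exp (-(c js / cbar)) := by
            have heq2 : f ιstar - f (insert js ιt)
                = (f ιstar - f ιt) - (f (insert js ιt) - f ιt) := by ring
            rw [heq2]
            exact hstep
          have hres := hchain₁ (D * Real.exp (-(c js / cbar)))
            (mul_nonneg hD (Real.exp_pos _).le) hstep2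
          have hsum_ins : ∑ i ∈ insert js ιt, c i = c js + ∑ i ∈ ιt, c i :=
            Finset.sum_insert hjι
          rw [hsum_ins] at hres
          have heq : D * Real.exp (-(c js / cbar)) *
              Real.exp (-(((∑ i ∈ S₁, c i) - (c js + ∑ i ∈ ιt, c i)) / cbar))
              = D * Real.exp (-(((∑ i ∈ S₁, c i) - (∑ i ∈ ιt, c i)) / cbar)) := by
            rw [mul_assoc, ← Real.exp_add]
            congr 2
            ring
          rw [heq] at hres
          exact hres
      · -- js does not fit
        rw [if_neg hfit]
        by_cases hjstar : js ∈ ιstar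
        · -- first skipped optimal element: switch to the second-phase analysis
          have hmargH : f (insert js ιt) - f ιt ≤ H' := by
            have h5 := submod_pair hsubmod (Finset.empty_subset ιt) hjι
            have h6 : (insert js ∅ : Finset (Fin n)) = {js} := rfl
            rw [h6, hempty, sub_zero] at h5
            exact le_trans h5 (hHs js hjstar)
          have hd₁X' : js ∉ Xt.erase js := Finset.notMem_erase _ _
          have havail' : (ιstar \ ιt).erase js ⊆ Xt.erase js := by
            intro x hx
            rw [Finset.mem_erase] at hx ⊢
            exact ⟨hx.1, havail hx.2⟩
          rcases loopB f c cbar hmono hsubmod hc ιstar hfeas js hjstar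
              (f (insert js ιt) - f ιt) (Xt.erase js) ιt
              (hdisj.mono_left (Finset.erase_subset _ _)) hd₁X' hjι havail' le_rfl with
            hleft | ⟨S₂, d₂, hd₂s, hd₂ne, hskip₂, hfS₂, hchain⟩
          · left
            linarith [hmargH]
          · right
            push_neg at hfit
            refine ⟨ιt, js, S₂, d₂, f (insert js ιt) - f ιt, hjstar, hd₂s, hd₂ne,
              margin_nonneg hmono js ιt, hmargH, by linarith, hskip₂,
              hmono _ _ (subset_greedyLoop f c cbar _ _), hfS₂, ?_, hchain⟩
            intro D hD hDle
            simpa using hDle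
        · -- skipped element not in ιstar: pass through
          have havail' : ιstar \ ιt ⊆ Xt.erase js := by
            intro x hx
            refine Finset.mem_erase.mpr ⟨?_, havail hx⟩
            intro h
            exact hjstar (h ▸ (Finset.mem_sdiff.mp hx).1)
          exact ih _ (Finset.erase_ssubset hjmem) _
            (hdisj.mono_left (Finset.erase_subset _ _)) havail'
    · -- Xt is empty: ιstar ⊆ ιt
      rw [greedyLoop_empty f c cbar Xt ιt hne]
      left
      have hXtempty : Xt = ∅ := Finset.not_nonempty_iff_eq_empty.mp hne
      have hsub : ιstar ⊆ ιt := by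
        intro x hx
        by_contra hcon
        have hx2 : x ∈ ιstar \ ιt := Finset.mem_sdiff.mpr ⟨hx, hcon⟩
        rw [hXtempty] at havail
        exact absurd (havail hx2) (Finset.notMem_empty x)
      have := hmono ιstar ιt hsub
      linarith

/-- The output `ι^g` of the generalized greedy algorithm: the better (w.r.t. `f`) of the set
constructed by the greedy loop (started from the empty set with all elements unexamined) and the
best feasible singleton `{j₁*}`, where `j₁*` maximizes `f {j}` over the `j` with `c j ≤ cbar`. -/
noncomputable def greedyOutput {n : ℕ} (f : Finset (Fin n) → ℝ) (c : Fin n → ℝ) (cbar : ℝ) :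
    Finset (Fin n) :=
  let ιt := greedyLoop f c cbar Finset.univ ∅
  if h : (Finset.univ.filter fun j : Fin n => c j ≤ cbar).Nonempty then
    let j₁ := argmaxIn _ (fun j => f {j}) h
    if f ιt ≤ f {j₁} then {j₁} else ιt
  else ιt

set_option maxHeartbeats 1000000 in
/-- Let `f` be a monotone nondecreasing submodular set function with `f ∅ = 0`,
`c` positive costs and `cbar > 0` a budget. The output `ι^g` of the generalized greedy algorithm
(with cost-scaling exponent `β = 1`) satisfies `f(ι^g) ≥ (1 − 1/√e) · f(ι*)`, where `ι*` is an
optimal solution of maximizing `f(ι)` subject to `Σ_{i∈ι} c i ≤ cbar`. -/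
theorem generalized_greedy_guarantee {n : ℕ}
    (f : Finset (Fin n) → ℝ) (c : Fin n → ℝ) (cbar : ℝ)
    (hmono : ∀ T₁ T₂ : Finset (Fin n), T₁ ⊆ T₂ → f T₁ ≤ f T₂)
    (hsubmod : ∀ T₁ T₂ : Finset (Fin n), T₁ ⊆ T₂ → T₂ ⊂ Finset.univ → ∀ i ∉ T₂,
      f (insert i T₁) - f T₁ ≥ f (insert i T₂) - f T₂)
    (hempty : f ∅ = 0)
    (hc : ∀ i, 0 < c i) (hcbar : 0 < cbar)
    (ιstar : Finset (Fin n))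
    (hfeas : ∑ i ∈ ιstar, c i ≤ cbar)
    (hopt : ∀ ι : Finset (Fin n), ∑ i ∈ ι, c i ≤ cbar → f ι ≤ f ιstar) :
    f (greedyOutput f c cbar) ≥ (1 - 1 / Real.sqrt (Real.exp 1)) * f ιstar := by
  have hfnn : ∀ S : Finset (Fin n), 0 ≤ f S := by
    intro S
    have := hmono ∅ S (Finset.empty_subset S)
    rw [hempty] at this
    linarith
  have hOPT : 0 ≤ f ιstar := hfnn ιstar
  have hsqrt : Real.sqrt (Real.exp 1) = Real.exp (1/2 : ℝ) := by
    have h : Real.exp 1 = (Real.exp (1/2 : ℝ))^2 := by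
      rw [sq, ← Real.exp_add]; norm_num
    rw [h, Real.sqrt_sq (Real.exp_pos _).le]
  have hconst : 1 - 1 / Real.sqrt (Real.exp 1) = 1 - Real.exp (-(1/2 : ℝ)) := by
    rw [hsqrt, Real.exp_neg, one_div]
  rw [hconst]
  set E := Real.exp (-(1/2 : ℝ)) with hEdef
  have hEpos : 0 < E := Real.exp_pos _
  have hE2 : E * E = Real.exp (-1 : ℝ) := by rw [hEdef, ← Real.exp_add]; norm_num
  have he1 : Real.exp 1 < 49/16 := lt_trans Real.exp_one_lt_d9 (by norm_num)
  have hinv : (16:ℝ)/49 < Real.exp (-1 : ℝ) := by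
    rw [Real.exp_neg]
    calc (16:ℝ)/49 = ((49:ℝ)/16)⁻¹ := by norm_num
      _ < (Real.exp 1)⁻¹ := inv_strictAnti₀ (Real.exp_pos 1) he1
  have hE47 : (4:ℝ)/7 < E := by nlinarith
  by_cases hfl : (Finset.univ.filter fun j : Fin n => c j ≤ cbar).Nonempty
  · have hout : greedyOutput f c cbar =
        (if f (greedyLoop f c cbar Finset.univ ∅) ≤
            f {argmaxIn (Finset.univ.filter fun j : Fin n => c j ≤ cbar) (fun j => f {j}) hfl}
          then {argmaxIn (Finset.univ.filter fun j : Fin n => c j ≤ cbar) (fun j => f {j}) hfl}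
          else greedyLoop f c cbar Finset.univ ∅) := by
      simp only [greedyOutput]
      rw [dif_pos hfl]
    rw [hout]
    set j₁ := argmaxIn (Finset.univ.filter fun j : Fin n => c j ≤ cbar) (fun j => f {j}) hfl
      with hj₁def
    have hVG : f (greedyLoop f c cbar Finset.univ ∅) ≤
        f (if f (greedyLoop f c cbar Finset.univ ∅) ≤ f {j₁} then {j₁}
          else greedyLoop f c cbar Finset.univ ∅) := by
      split_ifs with h2
      · exact h2
      · exact le_rfl
    have hVH : f {j₁} ≤
        f (if f (greedyLoop f c cbar Finset.univ ∅) ≤ f {j₁} then {j₁}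
          else greedyLoop f c cbar Finset.univ ∅) := by
      split_ifs with h2
      · exact le_rfl
      · linarith [not_le.mp h2]
    have hHs : ∀ x ∈ ιstar, f {x} ≤ f {j₁} := by
      intro x hx
      have hcx : c x ≤ cbar := le_trans (Finset.single_le_sum (fun i _ => (hc i).le) hx) hfeas
      exact argmaxIn_spec _ (fun j => f {j}) hfl x (Finset.mem_filter.mpr ⟨Finset.mem_univ x, hcx⟩)
    rcases loopA f c cbar hmono hsubmod hempty hc ιstar hfeas (f {j₁}) (hfnn _) hHs
        Finset.univ ∅ (Finset.disjoint_empty_right _) (fun x _ => Finset.mem_univ x) with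
      hleft | ⟨S₁, d₁, S₂, d₂, h₁, hd₁s, hd₂s, hd₂₁, hh₁nn, hh₁H, hskip₁, hskip₂,
        hfS₁, hfS₂, hchain₁, hchain₂⟩
    · -- at most one skipped optimal element
      nlinarith [mul_nonneg hOPT (by linarith : (0:ℝ) ≤ 2*E - 1)]
    · by_contra hcon
      push_neg at hcon
      have hGlt : f (greedyLoop f c cbar Finset.univ ∅) < (1 - E) * f ιstar :=
        lt_of_le_of_lt hVG hcon
      have hfS₁lt : f S₁ < (1 - E) * f ιstar := lt_of_le_of_lt hfS₁ hGlt
      have hfS₂lt : f S₂ < (1 - E) * f ιstar := lt_of_le_of_lt hfS₂ hGlt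
      have hh₁lt : h₁ < (1 - E) * f ιstar := lt_of_le_of_lt (le_trans hh₁H hVH) hcon
      have hpair : c d₁ + c d₂ ≤ cbar := by
        have hsubp : ({d₂, d₁} : Finset (Fin n)) ⊆ ιstar := by
          intro x hx
          rcases Finset.mem_insert.mp hx with rfl | hx
          · exact hd₂s
          · rw [Finset.mem_singleton] at hx
            subst hx
            exact hd₁s
        have h10 := Finset.sum_le_sum_of_subset_of_nonneg hsubp (fun i _ _ => (hc i).le)
        rw [Finset.sum_pair hd₂₁] at h10
        linarith
      have hs₁nn : (0:ℝ) ≤ ∑ i ∈ S₁, c i := Finset.sum_nonneg fun i _ => (hc i).le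
      have hchainF₁ := hchain₁ (f ιstar) hOPT (by rw [hempty]; linarith)
      rw [Finset.sum_empty, sub_zero] at hchainF₁
      rcases le_or_gt (cbar/2) (∑ i ∈ S₁, c i) with hhalf | hhalf
      · -- the first phase already reached half of the budget
        have hexp : Real.exp (-((∑ i ∈ S₁, c i) / cbar)) ≤ E := by
          rw [hEdef]
          apply Real.exp_le_exp.mpr
          have h11 : (1:ℝ)/2 ≤ (∑ i ∈ S₁, c i) / cbar := by
            rw [le_div_iff₀ hcbar]
            linarith
          linarith
        have h8 : f ιstar - f S₁ ≤ f ιstar * E :=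
          le_trans hchainF₁ (mul_le_mul_of_nonneg_left hexp hOPT)
        nlinarith
      · -- c d₁ is more than half of the budget
        have hx₁ : cbar - ∑ i ∈ S₁, c i < c d₁ := by linarith
        have hWpos : 0 < cbar - c d₁ := by linarith [hc d₂]
        have hWs₁ : cbar - c d₁ < ∑ i ∈ S₁, c i := by linarith
        have hs₂d₁ : c d₁ ≤ ∑ i ∈ S₂, c i := by linarith
        rcases le_or_gt (f ιstar - h₁ - f S₁) 0 with hD₂ | hD₂
        · nlinarith [mul_nonneg hOPT (by linarith : (0:ℝ) ≤ 2*E - 1)]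
        · have hchainF₂ := hchain₂ (f ιstar - h₁ - f S₁) hD₂.le le_rfl
          have ht1 : Real.exp (-((c d₁ - ∑ i ∈ S₁, c i) / (cbar - c d₁))) ≤ 1 := by
            rw [← Real.exp_zero]
            apply Real.exp_le_exp.mpr
            have h9 : 0 ≤ (c d₁ - ∑ i ∈ S₁, c i) / (cbar - c d₁) :=
              div_nonneg (by linarith) hWpos.le
            linarith
          have hexpt : Real.exp (-(((∑ i ∈ S₂, c i) - (∑ i ∈ S₁, c i)) / (cbar - c d₁))) ≤
              Real.exp (-((c d₁ - ∑ i ∈ S₁, c i) / (cbar - c d₁))) := by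
            apply Real.exp_le_exp.mpr
            have h9 : (c d₁ - ∑ i ∈ S₁, c i) / (cbar - c d₁) ≤
                ((∑ i ∈ S₂, c i) - (∑ i ∈ S₁, c i)) / (cbar - c d₁) :=
              (div_le_div_iff_of_pos_right hWpos).mpr (by linarith)
            linarith
          have hF₂ := le_trans hchainF₂ (mul_le_mul_of_nonneg_left hexpt hD₂.le)
          have hs_half : (∑ i ∈ S₁, c i) / cbar ≤ 1/2 := by
            rw [div_le_iff₀ hcbar]
            linarith
          have hws' : (cbar - c d₁) / cbar ≤ (∑ i ∈ S₁, c i) / cbar :=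
            (div_le_div_iff_of_pos_right hcbar).mpr hWs₁.le
          have hRR := lemmaR (s := (∑ i ∈ S₁, c i) / cbar) (w := (cbar - c d₁) / cbar)
            (div_pos hWpos hcbar) hws' hs_half
          have hexpeq : Real.exp (-((1 - (∑ i ∈ S₁, c i) / cbar - (cbar - c d₁) / cbar) /
              ((cbar - c d₁) / cbar)))
              = Real.exp (-((c d₁ - ∑ i ∈ S₁, c i) / (cbar - c d₁))) := by
            congr 1
            rw [neg_inj]
            field_simp
            ring
          rw [hexpeq, ← hEdef] at hRR
          have ht0 : (0:ℝ) ≤ Real.exp (-((c d₁ - ∑ i ∈ S₁, c i) / (cbar - c d₁))) :=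
            (Real.exp_pos _).le
          have hD₂le : f ιstar - h₁ - f S₁ ≤
              f ιstar * Real.exp (-((∑ i ∈ S₁, c i) / cbar)) - h₁ := by linarith
          have h5 := mul_le_mul_of_nonneg_right hD₂le ht0
          have h6 : h₁ * (1 - Real.exp (-((c d₁ - ∑ i ∈ S₁, c i) / (cbar - c d₁)))) ≤
              ((1 - E) * f ιstar) *
                (1 - Real.exp (-((c d₁ - ∑ i ∈ S₁, c i) / (cbar - c d₁)))) :=
            mul_le_mul_of_nonneg_right hh₁lt.le (by linarith)
          have h7 := mul_le_mul_of_nonneg_left hRR hOPT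
          linarith [le_trans hF₂ h5, h6, h7, hfS₂lt]
  · have hout : greedyOutput f c cbar = greedyLoop f c cbar Finset.univ ∅ := by
      simp only [greedyOutput]
      rw [dif_neg hfl]
    rw [hout]
    have hstar : ιstar = ∅ := by
      rw [Finset.eq_empty_iff_forall_notMem]
      intro x hx
      have hcx : c x ≤ cbar := le_trans (Finset.single_le_sum (fun i _ => (hc i).le) hx) hfeas
      exact hfl ⟨x, Finset.mem_filter.mpr ⟨Finset.mem_univ x, hcx⟩⟩
    rw [hstar, hempty, mul_zero]
    exact hfnn _
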